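/- Let S and Q be periodic sequences in ℝ, each with an m-point motif and a minimal period (l for S, l' for Q). Then there exist a ≠ 0 and b ∈ ℝ with Q = {a·x + b : x ∈ S} (a similarity) if and only if there exists s ∈ ZMod m such that (1/l')·D(Q) = σ_s((1/l)·D(S)) or (1/l')·D(Q) = σ_s(ρ((1/l)·D(S))). In other words, the normalized distance list considered up to cyclic permutations and reversal is a complete invariant of periodic sequences up to similarity. -/

import Mathlib

/-- A periodic sequence in `ℝ` with an `m`-point motif `p` and period `l`:
the set `{p i + l * j : i ∈ Fin m, j ∈ ℤ}` where `0 ≤ p 0 < p 1 < ⋯ < p (m-1) < l`. -/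
structure PSeq (m : ℕ) where
  m_pos : 0 < m
  l : ℝ
  l_pos : 0 < l
  p : Fin m → ℝ
  p_strict : StrictMono p
  p0_nonneg : 0 ≤ p ⟨0, m_pos⟩
  p_lt : ∀ i, p i < l

namespace PSeq

variable {m : ℕ}

/-- The set of points of the periodic sequence. -/
def pts (S : PSeq m) : Set ℝ := {x | ∃ (i : Fin m) (j : ℤ), x = S.p i + S.l * j}

/-- The period is minimal: the same set of points cannot be produced with a smaller period. -/
def IsMinimal (S : PSeq m) : Prop := ∀ (m' : ℕ) (T : PSeq m'), T.pts = S.pts → S.l ≤ T.l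

/-- The distance list `D` of the periodic sequence, indexed by `ZMod m`:
`D i = p (i+1) - p i` for `i < m - 1`, and `D (m-1) = (p 0 + l) - p (m-1)`. -/
noncomputable def D (S : PSeq m) : ZMod m → ℝ := fun i =>
  letI : NeZero m := ⟨S.m_pos.ne'⟩
  if h : i.val + 1 < m then S.p ⟨i.val + 1, h⟩ - S.p ⟨i.val, i.val_lt⟩
  else S.p ⟨0, S.m_pos⟩ + S.l - S.p ⟨i.val, i.val_lt⟩

end PSeq

/-- The cyclic shift `σ_s` acting on vectors indexed by `ZMod n`: `(σ_s v) i = v (i + s)`. -/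
def shiftVec {n : ℕ} (s : ZMod n) (v : ZMod n → ℝ) : ZMod n → ℝ := fun i => v (i + s)

/-- The reversal `ρ`: `(ρ v) i = v (m - 1 - i)` (note `m - 1 = -1` in `ZMod m`). -/
def revVec {n : ℕ} (v : ZMod n → ℝ) : ZMod n → ℝ := fun i => v (-1 - i)

namespace PSeqAux

open PSeq

variable {m : ℕ}

/-- The increasing enumeration of the points of `S`. -/
noncomputable def en (S : PSeq m) : ℤ → ℝ := fun k =>
  S.p ⟨(k % (m : ℤ)).toNat, by
    have hm : (0:ℤ) < (m:ℤ) := by exact_mod_cast S.m_pos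
    have h1 := Int.emod_nonneg k hm.ne'
    have h2 := Int.emod_lt_of_pos k hm
    omega⟩ + S.l * ((k / (m : ℤ) : ℤ) : ℝ)

lemma en_def' (S : PSeq m) (k : ℤ) (n : ℕ) (hn : n < m)
    (hn2 : (k % (m : ℤ)).toNat = n) :
    en S k = S.p ⟨n, hn⟩ + S.l * ((k / (m : ℤ) : ℤ) : ℝ) := by
  subst hn2; rfl

lemma eq_of_step {α : Type*} (h : ℤ → α) (hs : ∀ k, h (k + 1) = h k) :
    ∀ k, h k = h 0 := by
  intro k
  induction k using Int.induction_on with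
  | zero => rfl
  | succ i ih => rw [hs]; exact ih
  | pred i ih =>
      have h2 : h (-(i:ℤ)) = h (-(i:ℤ) - 1) := by
        have := hs (-(i:ℤ) - 1)
        rwa [show (-(i:ℤ) - 1 + 1) = -(i:ℤ) by ring] at this
      rw [← h2]; exact ih

lemma intCast_val [NeZero m] (x : ZMod m) : (((x.val : ℕ) : ℤ) : ZMod m) = x := by
  rw [Int.cast_natCast]
  exact ZMod.natCast_rightInverse x

lemma en_step (S : PSeq m) (k : ℤ) :
    en S (k + 1) - en S k = S.D ((k : ℤ) : ZMod m) := by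
  haveI : NeZero m := ⟨S.m_pos.ne'⟩
  have hm : (0:ℤ) < (m:ℤ) := by exact_mod_cast S.m_pos
  have h0 := Int.mul_ediv_add_emod k (m : ℤ)
  have hr0 : 0 ≤ k % (m:ℤ) := Int.emod_nonneg k hm.ne'
  have hrm : k % (m:ℤ) < (m:ℤ) := Int.emod_lt_of_pos k hm
  have hval : ((((k : ℤ) : ZMod m)).val : ℤ) = k % (m:ℤ) := ZMod.val_intCast k
  have hvlt : ((k : ℤ) : ZMod m).val < m := ZMod.val_lt _
  rw [PSeq.D]
  by_cases h : ((k : ℤ) : ZMod m).val + 1 < m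
  · rw [dif_pos h]
    have hdm : (k+1) / (m:ℤ) = k / (m:ℤ) ∧ (k+1) % (m:ℤ) = k % (m:ℤ) + 1 := by
      rw [Int.ediv_emod_unique hm]
      refine ⟨by linarith, by linarith, by omega⟩
    have e1 : en S (k+1) = S.p ⟨((k : ℤ) : ZMod m).val + 1, h⟩
        + S.l * ((k / (m : ℤ) : ℤ) : ℝ) := by
      rw [en_def' S (k+1) (((k : ℤ) : ZMod m).val + 1) h (by omega), hdm.1]
    have e2 : en S k = S.p ⟨((k : ℤ) : ZMod m).val, hvlt⟩
        + S.l * ((k / (m : ℤ) : ℤ) : ℝ) := en_def' S k _ hvlt (by omega)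
    rw [e1, e2]; ring
  · rw [dif_neg h]
    have hreq : k % (m:ℤ) = (m:ℤ) - 1 := by omega
    have hdm : (k+1) / (m:ℤ) = k / (m:ℤ) + 1 ∧ (k+1) % (m:ℤ) = 0 := by
      rw [Int.ediv_emod_unique hm]
      have hx : (m:ℤ) * (k / (m:ℤ) + 1) = (m:ℤ) * (k / (m:ℤ)) + (m:ℤ) := by ring
      refine ⟨by linarith, le_refl _, hm⟩
    have e1 : en S (k+1) = S.p ⟨0, S.m_pos⟩
        + S.l * (((k / (m : ℤ) + 1 : ℤ)) : ℝ) := by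
      rw [en_def' S (k+1) 0 S.m_pos (by omega), hdm.1]
    have e2 : en S k = S.p ⟨((k : ℤ) : ZMod m).val, hvlt⟩
        + S.l * ((k / (m : ℤ) : ℤ) : ℝ) := en_def' S k _ hvlt (by omega)
    rw [e1, e2]
    push_cast
    ring

lemma D_pos (S : PSeq m) (i : ZMod m) : 0 < S.D i := by
  haveI : NeZero m := ⟨S.m_pos.ne'⟩
  rw [PSeq.D]
  by_cases h : i.val + 1 < m
  · rw [dif_pos h]
    have := S.p_strict (show (⟨i.val, i.val_lt⟩ : Fin m) < ⟨i.val + 1, h⟩ by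
      exact Fin.mk_lt_mk.mpr (Nat.lt_succ_self _))
    linarith
  · rw [dif_neg h]
    have h1 := S.p_lt ⟨i.val, i.val_lt⟩
    have h2 := S.p0_nonneg
    linarith

lemma en_mono (S : PSeq m) : StrictMono (en S) := by
  apply strictMono_int_of_lt_succ
  intro k
  have h1 := en_step S k
  have h2 := D_pos S ((k : ℤ) : ZMod m)
  linarith

lemma en_range (S : PSeq m) : Set.range (en S) = S.pts := by
  ext x
  constructor
  · rintro ⟨k, rfl⟩
    exact ⟨_, k / (m : ℤ), rfl⟩
  · rintro ⟨i, j, rfl⟩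
    have hm : (0:ℤ) < (m:ℤ) := by exact_mod_cast S.m_pos
    refine ⟨(i : ℤ) + (m:ℤ) * j, ?_⟩
    have hdm : ((i : ℤ) + (m:ℤ) * j) / (m:ℤ) = j ∧ ((i : ℤ) + (m:ℤ) * j) % (m:ℤ) = (i:ℤ) := by
      rw [Int.ediv_emod_unique hm]
      refine ⟨rfl, by exact_mod_cast Nat.zero_le _, by exact_mod_cast i.isLt⟩
    rw [en_def' S _ i.val i.isLt (by omega), hdm.1]

lemma en_add_m (S : PSeq m) (k : ℤ) : en S (k + (m:ℤ)) = en S k + S.l := by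
  have hm : (0:ℤ) < (m:ℤ) := by exact_mod_cast S.m_pos
  have h0 := Int.mul_ediv_add_emod k (m : ℤ)
  have hr0 : 0 ≤ k % (m:ℤ) := Int.emod_nonneg k hm.ne'
  have hrm : k % (m:ℤ) < (m:ℤ) := Int.emod_lt_of_pos k hm
  have hdm : (k + (m:ℤ)) / (m:ℤ) = k / (m:ℤ) + 1 ∧ (k + (m:ℤ)) % (m:ℤ) = k % (m:ℤ) := by
    rw [Int.ediv_emod_unique hm]
    have hx : (m:ℤ) * (k / (m:ℤ) + 1) = (m:ℤ) * (k / (m:ℤ)) + (m:ℤ) := by ring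
    refine ⟨by linarith, hr0, hrm⟩
  have hlt : (k % (m:ℤ)).toNat < m := by omega
  rw [en_def' S (k + (m:ℤ)) _ hlt (by omega), hdm.1,
      en_def' S k _ hlt rfl]
  push_cast
  ring

lemma D_sum [NeZero m] (S : PSeq m) : ∑ i : ZMod m, S.D i = S.l := by
  have hbij : Function.Bijective (fun k : Fin m => ((k : ℕ) : ZMod m)) := by
    constructor
    · intro x y hxy
      have hxy' : ((x : ℕ) : ZMod m) = ((y : ℕ) : ZMod m) := hxy
      have hx : (((x : ℕ) : ZMod m)).val = (x : ℕ) := ZMod.val_cast_of_lt x.isLt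
      have hy : (((y : ℕ) : ZMod m)).val = (y : ℕ) := ZMod.val_cast_of_lt y.isLt
      have : (x : ℕ) = (y : ℕ) := by rw [← hx, ← hy, hxy']
      exact Fin.ext this
    · intro i
      exact ⟨⟨i.val, i.val_lt⟩, ZMod.natCast_rightInverse i⟩
  have h1 : ∑ i : ZMod m, S.D i = ∑ k : Fin m, S.D ((k : ℕ) : ZMod m) :=
    (Fintype.sum_bijective _ hbij _ _ (fun k => rfl)).symm
  rw [h1, Fin.sum_univ_eq_sum_range (fun k => S.D ((k : ℕ) : ZMod m))]
  have h2 : ∀ k ∈ Finset.range m, S.D ((k : ℕ) : ZMod m)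
      = (fun n : ℕ => en S (n : ℤ)) (k + 1) - (fun n : ℕ => en S (n : ℤ)) k := by
    intro k _
    have := en_step S (k : ℤ)
    show S.D ((k : ℕ) : ZMod m) = en S (((k + 1 : ℕ)) : ℤ) - en S ((k : ℕ) : ℤ)
    rw [show (((k:ℕ) + 1 : ℕ) : ℤ) = (k : ℤ) + 1 by push_cast; ring]
    rw [this]
    norm_cast
  rw [Finset.sum_congr rfl h2, Finset.sum_range_sub (fun n : ℕ => en S (n : ℤ)) m]
  show en S ((m : ℕ) : ℤ) - en S ((0 : ℕ) : ℤ) = S.l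
  have := en_add_m S 0
  rw [show ((0:ℕ):ℤ) = 0 by norm_num]
  rw [show ((m:ℕ):ℤ) = 0 + (m:ℤ) by ring, this]
  ring

lemma exists_shift {f g : ℤ → ℝ} (hf : StrictMono f) (hg : StrictMono g)
    (h : Set.range f = Set.range g) : ∃ t : ℤ, ∀ k, g k = f (k + t) := by
  have hmem : ∀ k, ∃ j, f j = g k := by
    intro k
    have : g k ∈ Set.range f := by rw [h]; exact ⟨k, rfl⟩
    exact this
  choose φ hφ using hmem
  have hφmono : StrictMono φ := by
    intro a b hab
    have : f (φ a) < f (φ b) := by rw [hφ, hφ]; exact hg hab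
    exact hf.lt_iff_lt.mp this
  have hφsurj : Function.Surjective φ := by
    intro j
    have : f j ∈ Set.range g := by rw [← h]; exact ⟨j, rfl⟩
    obtain ⟨k, hk⟩ := this
    exact ⟨k, hf.injective (by rw [hφ, hk])⟩
  have hsucc : ∀ k, φ (k + 1) = φ k + 1 := by
    intro k
    have h1 : φ k + 1 ≤ φ (k + 1) := hφmono (lt_add_one k)
    by_contra hne
    have h2 : φ k + 2 ≤ φ (k + 1) := by omega
    obtain ⟨j, hj⟩ := hφsurj (φ k + 1)
    rcases le_or_gt j k with hjk | hjk
    · have := hφmono.monotone hjk; omega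
    · have : k + 1 ≤ j := hjk
      have := hφmono.monotone this; omega
  have hlin : ∀ k, φ k = k + φ 0 := by
    have hc := eq_of_step (fun k => φ k - k) (by
      intro k
      rw [hsucc k]; ring)
    intro k
    have h3 := hc k
    omega
  exact ⟨φ 0, fun k => by rw [← hφ k, hlin k]⟩

end PSeqAux

open PSeqAux

/-- the normalized distance list up to cyclic permutations and reversal
is a complete invariant of periodic sequences up to similarity. -/
theorem normalized_distance_list_complete_up_to_similarity {m : ℕ}
    (S Q : PSeq m) (hS : S.IsMinimal) (hQ : Q.IsMinimal) :
    (∃ (a b : ℝ), a ≠ 0 ∧ Q.pts = (fun x => a * x + b) '' S.pts) ↔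
    ∃ s : ZMod m, (1 / Q.l) • Q.D = shiftVec s ((1 / S.l) • S.D) ∨
      (1 / Q.l) • Q.D = shiftVec s (revVec ((1 / S.l) • S.D)) := by
  haveI : NeZero m := ⟨S.m_pos.ne'⟩
  have hSl := S.l_pos
  have hQl := Q.l_pos
  constructor
  · rintro ⟨a, b, ha, himg⟩
    rcases lt_or_gt_of_ne ha with haneg | hapos
    · -- a < 0 : reversal case
      have hgmono : StrictMono (fun k : ℤ => a * en S (-k) + b) := by
        intro x y hxy
        have h1 : en S (-y) < en S (-x) := en_mono S (by omega)
        have := mul_lt_mul_of_neg_left h1 haneg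
        simpa using by linarith
      have hrange : Set.range (fun k : ℤ => a * en S (-k) + b) = Q.pts := by
        have hr1 : Set.range (fun k : ℤ => en S (-k)) = Set.range (en S) :=
          Function.Surjective.range_comp neg_surjective (en S)
        have hr2 : Set.range (fun k : ℤ => a * en S (-k) + b)
            = (fun x => a * x + b) '' Set.range (fun k : ℤ => en S (-k)) :=
          Set.range_comp (fun x => a * x + b) (fun k : ℤ => en S (-k))
        rw [hr2, hr1, en_range, himg]
      obtain ⟨t, ht⟩ := exists_shift (en_mono Q) hgmono (by rw [en_range, hrange])
      have ht' : ∀ k : ℤ, a * en S (-k) + b = en Q (k + t) := ht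
      have key : ∀ k : ℤ, Q.D (((k + t : ℤ)) : ZMod m)
          = (-a) * S.D (((-k - 1 : ℤ)) : ZMod m) := by
        intro k
        have e1 := en_step Q (k + t)
        rw [show k + t + 1 = (k + 1) + t by ring] at e1
        rw [← ht' (k + 1), ← ht' k] at e1
        have e2 := en_step S (-k - 1)
        rw [show (-k - 1) + 1 = -k by ring] at e2
        rw [← e1, ← e2, show (-(k + 1) : ℤ) = -k - 1 by ring]
        ring
      have key2 : ∀ j : ZMod m, Q.D j
          = (-a) * S.D ((t : ZMod m) - 1 - j) := by
        intro j
        obtain ⟨k, hk⟩ : ∃ k : ℤ, ((k : ℤ) : ZMod m) = j - (t : ZMod m) :=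
          ⟨((j - (t : ZMod m)).val : ℤ), intCast_val _⟩
        have hkt : (((k + t : ℤ)) : ZMod m) = j := by push_cast [hk]; ring
        have hkr : (((-k - 1 : ℤ)) : ZMod m) = (t : ZMod m) - 1 - j := by
          push_cast [hk]; ring
        have := key k
        rw [hkt, hkr] at this
        exact this
      have hal : Q.l = (-a) * S.l := by
        have h1 : ∑ j : ZMod m, Q.D j = ∑ j : ZMod m, (-a) * S.D ((t : ZMod m) - 1 - j) :=
          Finset.sum_congr rfl fun j _ => key2 j
        have h2 : ∑ j : ZMod m, S.D ((t : ZMod m) - 1 - j) = ∑ j : ZMod m, S.D j :=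
          Fintype.sum_equiv (Equiv.subLeft ((t : ZMod m) - 1)) _ _ (fun j => rfl)
        calc Q.l = ∑ j : ZMod m, Q.D j := (D_sum Q).symm
        _ = ∑ j : ZMod m, (-a) * S.D ((t : ZMod m) - 1 - j) := h1
        _ = (-a) * ∑ j : ZMod m, S.D ((t : ZMod m) - 1 - j) := by rw [Finset.mul_sum]
        _ = (-a) * S.l := by rw [h2, D_sum S]
      refine ⟨-(t : ZMod m), Or.inr ?_⟩
      funext i
      simp only [Pi.smul_apply, smul_eq_mul, shiftVec, revVec]
      rw [show (-1 : ZMod m) - (i + -(t : ZMod m)) = (t : ZMod m) - 1 - i by ring]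
      rw [key2 i, hal]
      have hna : (-a) ≠ 0 := by intro hc; apply ha; linarith
      field_simp
    · -- a > 0 : shift case
      have hgmono : StrictMono (fun k : ℤ => a * en S k + b) := by
        intro x y hxy
        have h1 : en S x < en S y := en_mono S hxy
        have := mul_lt_mul_of_pos_left h1 hapos
        simpa using by linarith
      have hrange : Set.range (fun k : ℤ => a * en S k + b) = Q.pts := by
        have hr2 : Set.range (fun k : ℤ => a * en S k + b)
            = (fun x => a * x + b) '' Set.range (en S) :=
          Set.range_comp (fun x => a * x + b) (en S)
        rw [hr2, en_range, himg]
      obtain ⟨t, ht⟩ := exists_shift (en_mono Q) hgmono (by rw [en_range, hrange])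
      have ht' : ∀ k : ℤ, a * en S k + b = en Q (k + t) := ht
      have key : ∀ k : ℤ, Q.D (((k + t : ℤ)) : ZMod m)
          = a * S.D (((k : ℤ)) : ZMod m) := by
        intro k
        have e1 := en_step Q (k + t)
        rw [show k + t + 1 = (k + 1) + t by ring] at e1
        rw [← ht' (k + 1), ← ht' k] at e1
        have e2 := en_step S k
        rw [← e1, ← e2]
        ring
      have key2 : ∀ j : ZMod m, Q.D j = a * S.D (j - (t : ZMod m)) := by
        intro j
        obtain ⟨k, hk⟩ : ∃ k : ℤ, ((k : ℤ) : ZMod m) = j - (t : ZMod m) :=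
          ⟨((j - (t : ZMod m)).val : ℤ), intCast_val _⟩
        have hkt : (((k + t : ℤ)) : ZMod m) = j := by push_cast [hk]; ring
        have := key k
        rw [hkt, hk] at this
        exact this
      have hal : Q.l = a * S.l := by
        have h1 : ∑ j : ZMod m, Q.D j = ∑ j : ZMod m, a * S.D (j - (t : ZMod m)) :=
          Finset.sum_congr rfl fun j _ => key2 j
        have h2 : ∑ j : ZMod m, S.D (j - (t : ZMod m)) = ∑ j : ZMod m, S.D j :=
          Fintype.sum_equiv (Equiv.subRight ((t : ZMod m))) _ _ (fun j => rfl)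
        calc Q.l = ∑ j : ZMod m, Q.D j := (D_sum Q).symm
        _ = ∑ j : ZMod m, a * S.D (j - (t : ZMod m)) := h1
        _ = a * ∑ j : ZMod m, S.D (j - (t : ZMod m)) := by rw [Finset.mul_sum]
        _ = a * S.l := by rw [h2, D_sum S]
      refine ⟨-(t : ZMod m), Or.inl ?_⟩
      funext i
      simp only [Pi.smul_apply, smul_eq_mul, shiftVec]
      rw [show i + -(t : ZMod m) = i - (t : ZMod m) by ring]
      rw [key2 i, hal]
      field_simp
  · rintro ⟨s, h | h⟩
    · -- shift case
      set a : ℝ := Q.l / S.l with hadef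
      have hapos : 0 < a := div_pos hQl hSl
      have hD : ∀ i : ZMod m, Q.D i = a * S.D (i + s) := by
        intro i
        have := congrFun h i
        simp only [Pi.smul_apply, smul_eq_mul, shiftVec] at this
        calc Q.D i = Q.l * ((1 / Q.l) * Q.D i) := by field_simp
        _ = Q.l * ((1 / S.l) * S.D (i + s)) := by rw [this]
        _ = a * S.D (i + s) := by rw [hadef]; ring
      obtain ⟨t, hts⟩ : ∃ t : ℤ, ((t : ℤ) : ZMod m) = -s :=
        ⟨(((-s : ZMod m)).val : ℤ), intCast_val _⟩
      have hstep : ∀ k : ℤ, en Q (k + t + 1) - en Q (k + t)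
          = a * (en S (k + 1) - en S k) := by
        intro k
        rw [en_step Q (k + t), en_step S k, hD]
        congr 2
        push_cast [hts]
        ring
      have hc := eq_of_step (fun k => en Q (k + t) - a * en S k) (by
        intro k
        have := hstep k
        rw [show k + 1 + t = k + t + 1 by ring]
        linarith)
      set b : ℝ := en Q (0 + t) - a * en S 0 with hbdef
      have hb : ∀ k : ℤ, en Q (k + t) = a * en S k + b := by
        intro k
        have := hc k
        rw [hbdef]; linarith
      refine ⟨a, b, hapos.ne', ?_⟩
      rw [← en_range Q, ← en_range S]
      have h1 : Set.range (en Q) = Set.range (fun k : ℤ => en Q (k + t)) :=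
        (Function.Surjective.range_comp (Equiv.addRight t).surjective (en Q)).symm
      rw [h1, funext hb]
      exact Set.range_comp (fun x => a * x + b) (en S)
    · -- reversal case
      set a : ℝ := -(Q.l / S.l) with hadef
      have hane : a ≠ 0 := by
        have : 0 < Q.l / S.l := div_pos hQl hSl
        rw [hadef]; intro hc; linarith
      have hD : ∀ i : ZMod m, Q.D i = (Q.l / S.l) * S.D (-1 - (i + s)) := by
        intro i
        have := congrFun h i
        simp only [Pi.smul_apply, smul_eq_mul, shiftVec, revVec] at this
        calc Q.D i = Q.l * ((1 / Q.l) * Q.D i) := by field_simp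
        _ = Q.l * ((1 / S.l) * S.D (-1 - (i + s))) := by rw [this]
        _ = (Q.l / S.l) * S.D (-1 - (i + s)) := by ring
      obtain ⟨t, hts⟩ : ∃ t : ℤ, ((t : ℤ) : ZMod m) = -s :=
        ⟨(((-s : ZMod m)).val : ℤ), intCast_val _⟩
      have hstep : ∀ k : ℤ, en Q (k + t + 1) - en Q (k + t)
          = a * (en S (-(k + 1)) - en S (-k)) := by
        intro k
        have e2 := en_step S (-k - 1)
        rw [show (-k - 1) + 1 = -k by ring] at e2
        rw [en_step Q (k + t), hD]
        rw [show -(k + 1) = -k - 1 by ring]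
        rw [show (-1 : ZMod m) - (((k + t : ℤ) : ZMod m) + s) = ((-k - 1 : ℤ) : ZMod m) by
          push_cast [hts]; ring]
        rw [← e2, hadef]
        ring
      have hc := eq_of_step (fun k => en Q (k + t) - a * en S (-k)) (by
        intro k
        have := hstep k
        rw [show k + 1 + t = k + t + 1 by ring]
        linarith)
      set b : ℝ := en Q (0 + t) - a * en S (-0) with hbdef
      have hb : ∀ k : ℤ, en Q (k + t) = a * en S (-k) + b := by
        intro k
        have := hc k
        rw [hbdef]; linarith
      refine ⟨a, b, hane, ?_⟩
      rw [← en_range Q, ← en_range S]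
      have h1 : Set.range (en Q) = Set.range (fun k : ℤ => en Q (k + t)) :=
        (Function.Surjective.range_comp (Equiv.addRight t).surjective (en Q)).symm
      have h2 : Set.range (fun k : ℤ => en S (-k)) = Set.range (en S) :=
        Function.Surjective.range_comp neg_surjective (en S)
      rw [h1, funext hb, ← h2]
      exact Set.range_comp (fun x => a * x + b) (fun k : ℤ => en S (-k))
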